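/- Let G be a countably infinite additive abelian group and (g_k)_{k∈ℕ} a sequence in G such that the additive orders of the g_k are finite and bounded above, the family of cyclic subgroups (⟨g_k⟩)_{k∈ℕ} is independent, and the g_k leave every finite subset of G (each finite F ⊆ G contains g_k for only finitely many k). Then for every finite subset F ⊆ G, every ε > 0 and every K ∈ ℕ, there exist k ≥ K and a finite subset C ⊆ G with #C > 1 such that the translates c + F, c ∈ C, are pairwise disjoint and #(C ∩ (C − g_k)) ≥ (1 − ε) · #C. -/

import Mathlib

open scoped Pointwise


/-- The core combinatorial claim of Lemma 4.2, case (iii) of a 'good' sequence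
(with `d = 0`): if the `g k` have uniformly bounded finite additive orders, the
cyclic subgroups `⟨g k⟩` are independent, and `(g k)` leaves every finite subset,
then for every finite `F`, `ε > 0` and `K` there are `k ≥ K` and a finite set `C`
with more than one element whose translates of `F` are pairwise disjoint and with
`#(C ∩ (C - g k)) ≥ (1 - ε) #C`. -/
theorem stmt14 {G : Type*} [AddCommGroup G] [Countable G] [Infinite G]
    (g : ℕ → G)
    (h1 : ∀ k, IsOfFinAddOrder (g k))
    (h2 : ∃ N : ℕ, ∀ k, addOrderOf (g k) ≤ N)
    (hind : iSupIndep fun k : ℕ => AddSubgroup.zmultiples (g k))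
    (hesc : ∀ F : Set G, F.Finite → {k : ℕ | g k ∈ F}.Finite) :
    ∀ F : Set G, F.Finite → ∀ ε : ℝ, 0 < ε → ∀ K : ℕ,
      ∃ k, K ≤ k ∧
        ∃ C : Set G, C.Finite ∧ 1 < C.ncard ∧
          (C.Pairwise fun c c' => Disjoint ((c + ·) '' F) ((c' + ·) '' F)) ∧
          (1 - ε) * (C.ncard : ℝ) ≤
            ((C ∩ (fun x => x - g k) '' C).ncard : ℝ) := by
  intro F hF ε hε K
  have hdisj : Pairwise (Function.onFun Disjoint fun k : ℕ => AddSubgroup.zmultiples (g k)) :=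
    hind.pairwiseDisjoint
  set D : Set G := (F - F) \ {0} with hDdef
  have hD : D.Finite := (hF.sub hF).diff
  -- for each nonzero d, at most one k with d ∈ ⟨g k⟩
  have hsub : ∀ d ∈ D, {k : ℕ | d ∈ AddSubgroup.zmultiples (g k)}.Subsingleton := by
    intro d hd k hk j hj
    by_contra hne
    have h0 : d = 0 := (AddSubgroup.disjoint_def.mp (hdisj hne)) hk hj
    exact hd.2 h0
  -- bad set
  set B : Set ℕ := {k : ℕ | ∃ d ∈ D, d ∈ AddSubgroup.zmultiples (g k)} with hBdef
  have hBsub : B ⊆ ⋃ d ∈ D, {k : ℕ | d ∈ AddSubgroup.zmultiples (g k)} := by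
    intro k hk
    obtain ⟨d, hd, hdk⟩ := hk
    exact Set.mem_biUnion hd hdk
  have hBfin : B.Finite :=
    Set.Finite.subset (hD.biUnion fun d hd => (hsub d hd).finite) hBsub
  have hB0fin : {k : ℕ | g k ∈ ({0} : Set G)}.Finite :=
    hesc {0} (Set.finite_singleton 0)
  have hbad : (B ∪ {k : ℕ | g k ∈ ({0} : Set G)}).Finite := hBfin.union hB0fin
  obtain ⟨M, hM⟩ := hbad.bddAbove
  set k := max K (M + 1) with hkdef
  have hkK : K ≤ k := le_max_left _ _
  have hknot : k ∉ B ∪ {k : ℕ | g k ∈ ({0} : Set G)} := by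
    intro hk
    have := hM hk
    omega
  have hkB : k ∉ B := fun h => hknot (Or.inl h)
  have hk0 : g k ≠ 0 := by
    intro h
    exact hknot (Or.inr (by simpa using h))
  refine ⟨k, hkK, (AddSubgroup.zmultiples (g k) : Set G), ?_, ?_, ?_, ?_⟩
  case _ =>
    -- finiteness
    have : Finite (AddSubgroup.zmultiples (g k)) := by
      refine Nat.finite_of_card_ne_zero ?_
      rw [Nat.card_zmultiples]
      exact (h1 k).addOrderOf_pos.ne'
    exact (AddSubgroup.zmultiples (g k) : Set G).toFinite
  case _ =>
    have hcard : (AddSubgroup.zmultiples (g k) : Set G).ncard = addOrderOf (g k) := by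
      rw [← Nat.card_coe_set_eq]
      exact Nat.card_zmultiples (g k)
    rw [hcard]
    have h1' : addOrderOf (g k) ≠ 1 := by
      intro h
      exact hk0 (AddMonoid.addOrderOf_eq_one_iff.mp h)
    have hpos := (h1 k).addOrderOf_pos
    omega
  case _ =>
    intro c hc c' hc' hne
    rw [Set.disjoint_left]
    rintro x ⟨f, hf, rfl⟩ ⟨f', hf', heq⟩
    -- heq : c' + f' = c + f
    have hmem : c - c' ∈ AddSubgroup.zmultiples (g k) := sub_mem hc hc'
    have hD' : c - c' ∈ D := by
      constructor
      · refine ⟨f', hf', f, hf, ?_⟩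
        show f' - f = c - c'
        rw [sub_eq_sub_iff_add_eq_add, add_comm f' c']
        exact heq
      · simp only [Set.mem_singleton_iff, sub_eq_zero]
        exact hne
    exact hkB ⟨c - c', hD', hmem⟩
  case _ =>
    have himg : (fun x => x - g k) '' (AddSubgroup.zmultiples (g k) : Set G) =
        (AddSubgroup.zmultiples (g k) : Set G) := by
      ext x
      constructor
      · rintro ⟨y, hy, rfl⟩
        exact sub_mem hy (AddSubgroup.mem_zmultiples (g k))
      · intro hx
        exact ⟨x + g k, add_mem hx (AddSubgroup.mem_zmultiples (g k)), add_sub_cancel_right x (g k)⟩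
    rw [himg, Set.inter_self]
    have hnn : (0 : ℝ) ≤ ((AddSubgroup.zmultiples (g k) : Set G).ncard : ℝ) := by positivity
    nlinarith
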